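/- Every functor u : A ⥤ B between small categories admits a comprehensive factorization: there exist a small category X, an initial functor j : A ⥤ X, and a discrete opfibration p : X ⥤ B with u = j ⋙ p. -/

import Mathlib

open CategoryTheory

universe u

/-- A functor `π : X ⥤ Y` is a discrete opfibration if for every object `x` of `X` and
every morphism `g : π x ⟶ y` of `Y` there is a unique morphism of `X` with domain `x`
lying over `g` (in particular, its codomain lies over `y`). -/
def IsDiscreteOpfibration {X : Type*} {Y : Type*} [Category X] [Category Y]
    (π : X ⥤ Y) : Prop :=
  ∀ ⦃x : X⦄ ⦃y : Y⦄ (g : π.obj x ⟶ y),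
    ∃! p : Σ x' : X, (x ⟶ x'),
      (⟨π.obj p.1, π.map p.2⟩ : Σ y' : Y, (π.obj x ⟶ y')) = ⟨y, g⟩

noncomputable section CompFact

variable {A B : Type u} [SmallCategory A] [SmallCategory B] (u : A ⥤ B)

/-- The functor sending `b` to the connected components of `CostructuredArrow u b`. -/
def compFunctor : B ⥤ Type u where
  obj b := ConnectedComponents (CostructuredArrow u b)
  map g := TypeCat.ofHom (CostructuredArrow.map g).mapConnectedComponents
  map_id b := by
    ext x
    induction x using Quotient.inductionOn' with
    | h Y => exact congrArg (Quotient.mk _) CostructuredArrow.map_id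
  map_comp f g := by
    ext x
    induction x using Quotient.inductionOn' with
    | h Y => exact congrArg (Quotient.mk _) CostructuredArrow.map_comp

/-- The initial part of the comprehensive factorization. -/
def compJ : A ⥤ (compFunctor u).Elements where
  obj a := ⟨u.obj a, Quotient.mk _ (CostructuredArrow.mk (𝟙 (u.obj a)))⟩
  map {a a'} f := ⟨u.map f, by
    dsimp only [compFunctor]
    show Quotient.mk _ (CostructuredArrow.mk (𝟙 (u.obj a) ≫ u.map f)) = _
    exact Quotient.sound (Zigzag.of_hom (CostructuredArrow.homMk f (by simp)))⟩
  map_id a := Subtype.ext (u.map_id a)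
  map_comp f g := Subtype.ext (u.map_comp f g)

variable {u}

/-- Comparison functor from the comma category over an element to the component. -/
def compG (d : (compFunctor u).Elements) :
    CostructuredArrow (compJ u) d ⥤ ConnectedComponents.Component (J := CostructuredArrow u d.1) d.2 where
  obj Y := ⟨CostructuredArrow.mk Y.hom.val, by
      have h := Y.hom.property
      dsimp only [compJ, compFunctor] at h
      change Quotient.mk _ (CostructuredArrow.mk (𝟙 (u.obj Y.left) ≫ Y.hom.val)) = _ at h
      replace h := (congrArg (fun k => (Quotient.mk _ (CostructuredArrow.mk k) :
        ConnectedComponents (CostructuredArrow u d.1))) (Category.id_comp Y.hom.val)).symm.trans h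
      exact h⟩
  map {Y Z} f := ObjectProperty.homMk (CostructuredArrow.homMk f.left (congrArg Subtype.val (CostructuredArrow.w f)))
  map_id Y := by apply ObjectProperty.hom_ext; apply CostructuredArrow.hom_ext; rfl
  map_comp f g := by apply ObjectProperty.hom_ext; apply CostructuredArrow.hom_ext; rfl

instance (d : (compFunctor u).Elements) : (compG d).Full where
  map_surjective {Y Z} f := by
    refine ⟨CostructuredArrow.homMk f.hom.left (Subtype.ext ?_), ?_⟩
    · exact CostructuredArrow.w f.hom
    · apply ObjectProperty.hom_ext; apply CostructuredArrow.hom_ext; rfl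

instance (d : (compFunctor u).Elements) : (compG d).Faithful where
  map_injective {Y Z} f g h := by
    apply CostructuredArrow.hom_ext
    have h' : ((compG d).map f).hom.left = ((compG d).map g).hom.left := congrArg (fun x => x.hom.left) h
    exact h'

instance (d : (compFunctor u).Elements) : (compG d).EssSurj where
  mem_essImage := by
    rintro ⟨Y, hY⟩
    refine ⟨CostructuredArrow.mk (Y := Y.left)
      (⟨Y.hom, ?_⟩ : (compJ u).obj Y.left ⟶ d), ⟨eqToIso ?_⟩⟩
    · dsimp only [compJ, compFunctor]
      show Quotient.mk _ (CostructuredArrow.mk (𝟙 (u.obj Y.left) ≫ Y.hom)) = _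
      rw [Category.id_comp,
        ← CostructuredArrow.eq_mk]
      exact hY
    · apply ObjectProperty.FullSubcategory.ext
      exact (CostructuredArrow.eq_mk Y).symm

instance compJ_initial : (compJ u).Initial := by
  constructor
  intro d
  have : (compG d).IsEquivalence := ⟨inferInstance, inferInstance, inferInstance⟩
  have hc := (fun (x : ConnectedComponents (CostructuredArrow u d.1)) => (inferInstance : IsConnected x.Component)) d.2
  exact isConnected_of_equivalent (compG d).asEquivalence.symm
end CompFact

/-- **Comprehensive factorization.** Every functor `u : A ⥤ B` between small categories
factors as an initial functor `j : A ⥤ X` followed by a discrete opfibration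
`p : X ⥤ B`. -/
theorem comprehensive_factorization {A B : Type u} [SmallCategory A] [SmallCategory B]
    (u : A ⥤ B) :
    ∃ (X : Cat.{u, u}) (j : A ⥤ X) (p : X ⥤ B),
      j.Initial ∧ IsDiscreteOpfibration p ∧ u = j ⋙ p := by
  refine ⟨Cat.of (compFunctor u).Elements, compJ u, CategoryOfElements.π _,
    compJ_initial, ?_, ?_⟩
  · rintro ⟨c, s⟩ y g
    refine ⟨⟨⟨y, (compFunctor u).map g s⟩, ⟨g, rfl⟩⟩, rfl, ?_⟩
    rintro ⟨⟨y', s'⟩, gg⟩ h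
    obtain ⟨h1, h2⟩ := Sigma.mk.inj_iff.mp h
    obtain rfl : y' = y := h1
    obtain hg : gg.val = g := eq_of_heq h2
    obtain rfl : s' = (compFunctor u).map g s := gg.property.symm.trans (by rw [hg]; rfl)
    exact Sigma.ext rfl (heq_of_eq (Subtype.ext hg))
  · rfl
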